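/- arXiv:2003.04697 — 3 statements merged into one kernel-verified Lean document; each statement's English description precedes it below -/
import Mathlib

section
/- Let G, k : [0,1]² → ℝ be continuous and nonnegative, N ≥ 0, and suppose N · max|k| · max_x ∫₀¹ G(x,s) ds < 1. If p : [0,1] → ℝ is continuous with p ≥ 0 and h : [0,1] → ℝ is continuous with h ≥ 0, then the unique fixed point y ∈ C[0,1] of (Ky)(x) = ∫₀¹ G(x,s)p(s)ds + N∫₀¹∫₀¹ G(x,s)k(s,t)y(t)dt ds + h(x) satisfies y(x) ≥ 0 for all x ∈ [0,1]. -/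
open Real Set intervalIntegral

/-- The integral operator `K` of the linear nonlocal problem. -/
noncomputable def Kop (G k : ℝ → ℝ → ℝ) (N : ℝ) (p h y : ℝ → ℝ) (x : ℝ) : ℝ :=
  (∫ s in (0:ℝ)..1, G x s * p s)
    + N * (∫ s in (0:ℝ)..1, ∫ t in (0:ℝ)..1, G x s * k s t * y t) + h x

theorem stmt_7 (G k : ℝ → ℝ → ℝ) (N : ℝ) (h p : ℝ → ℝ)
    (hG : ContinuousOn (fun q : ℝ × ℝ => G q.1 q.2) (Set.Icc 0 1 ×ˢ Set.Icc 0 1))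
    (hGnn : ∀ x ∈ Set.Icc (0:ℝ) 1, ∀ s ∈ Set.Icc (0:ℝ) 1, 0 ≤ G x s)
    (hk : ContinuousOn (fun q : ℝ × ℝ => k q.1 q.2) (Set.Icc 0 1 ×ˢ Set.Icc 0 1))
    (hknn : ∀ x ∈ Set.Icc (0:ℝ) 1, ∀ t ∈ Set.Icc (0:ℝ) 1, 0 ≤ k x t)
    (hN : 0 ≤ N)
    (hh : ContinuousOn h (Set.Icc 0 1)) (hp : ContinuousOn p (Set.Icc 0 1))
    (hhnn : ∀ x ∈ Set.Icc (0:ℝ) 1, 0 ≤ h x)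
    (hpnn : ∀ x ∈ Set.Icc (0:ℝ) 1, 0 ≤ p x)
    (kmax Gmax : ℝ)
    (hkmax : IsGreatest {r | ∃ x ∈ Set.Icc (0:ℝ) 1, ∃ t ∈ Set.Icc (0:ℝ) 1, r = |k x t|} kmax)
    (hGmax : IsGreatest {r | ∃ x ∈ Set.Icc (0:ℝ) 1, r = ∫ s in (0:ℝ)..1, G x s} Gmax)
    (hd : N * kmax * Gmax < 1) :
    ∀ y : ℝ → ℝ, ContinuousOn y (Set.Icc 0 1) →
      (∀ x ∈ Set.Icc (0:ℝ) 1, y x = Kop G k N p h y x) →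
      ∀ x ∈ Set.Icc (0:ℝ) 1, 0 ≤ y x := by
  intro y hy hfix
  have h0m : (0:ℝ) ∈ Set.Icc (0:ℝ) 1 := by norm_num
  have huI : Set.uIcc (0:ℝ) 1 = Set.Icc 0 1 := Set.uIcc_of_le zero_le_one
  have huIoc : Set.uIoc (0:ℝ) 1 = Set.Ioc 0 1 := Set.uIoc_of_le zero_le_one
  have cksect : ∀ s ∈ Set.Icc (0:ℝ) 1, ContinuousOn (fun t => k s t) (Set.Icc 0 1) := by
    intro s hs
    exact hk.comp (Continuous.continuousOn (by fun_prop))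
      (fun t ht => Set.mk_mem_prod hs ht)
  have cGsect : ∀ x ∈ Set.Icc (0:ℝ) 1, ContinuousOn (fun s => G x s) (Set.Icc 0 1) := by
    intro x hx
    exact hG.comp (Continuous.continuousOn (by fun_prop))
      (fun s hs => Set.mk_mem_prod hx hs)
  have hkmax_nn : 0 ≤ kmax := le_trans (abs_nonneg _) (hkmax.2 ⟨0, h0m, 0, h0m, rfl⟩)
  have hkb : ∀ s ∈ Set.Icc (0:ℝ) 1, ∀ t ∈ Set.Icc (0:ℝ) 1, k s t ≤ kmax := fun s hs t ht =>
    le_trans (le_abs_self _) (hkmax.2 ⟨s, hs, t, ht, rfl⟩)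
  obtain ⟨C, hC⟩ := isCompact_Icc.exists_bound_of_continuousOn hy
  obtain ⟨x₀, hx₀, hmin⟩ := isCompact_Icc.exists_isMinOn (Set.nonempty_Icc.2 zero_le_one) hy
  by_contra hcon
  push_neg at hcon
  obtain ⟨z, hz, hyz⟩ := hcon
  have hm : y x₀ < 0 := lt_of_le_of_lt (hmin hz) hyz
  set m := y x₀ with hmdef
  have hym : ∀ t ∈ Set.Icc (0:ℝ) 1, m ≤ y t := fun t ht => hmin ht
  set F : ℝ → ℝ := fun s => ∫ t in (0:ℝ)..1, k s t * y t with hF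
  -- continuity of F on [0,1]
  have hFcont : ContinuousOn F (Set.Icc 0 1) := by
    intro s hs
    apply intervalIntegral.continuousWithinAt_of_dominated_interval
      (bound := fun _ => kmax * C)
    · filter_upwards [self_mem_nhdsWithin] with x hx
      refine (((cksect x hx).mul hy).mono ?_).aestronglyMeasurable measurableSet_uIoc
      rw [huIoc]; exact Set.Ioc_subset_Icc_self
    · filter_upwards [self_mem_nhdsWithin] with x hx
      filter_upwards with t ht
      have ht' : t ∈ Set.Icc (0:ℝ) 1 := Set.Ioc_subset_Icc_self (huIoc ▸ ht)
      have h1 : |k x t| ≤ kmax := hkmax.2 ⟨x, hx, t, ht', rfl⟩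
      have h2 : ‖y t‖ ≤ C := hC t ht'
      calc ‖k x t * y t‖ = |k x t| * ‖y t‖ := by
            rw [Real.norm_eq_abs, abs_mul, Real.norm_eq_abs]
        _ ≤ kmax * C := mul_le_mul h1 h2 (norm_nonneg _) hkmax_nn
    · exact intervalIntegrable_const
    · filter_upwards with t ht
      have ht' : t ∈ Set.Icc (0:ℝ) 1 := Set.Ioc_subset_Icc_self (huIoc ▸ ht)
      have : ContinuousOn (fun x => k x t) (Set.Icc 0 1) :=
        hk.comp (Continuous.continuousOn (by fun_prop))
          (fun x hx => Set.mk_mem_prod hx ht')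
      exact (this.mul continuousOn_const) s hs
  -- inner bound : kmax * m ≤ F s
  have hFlb : ∀ s ∈ Set.Icc (0:ℝ) 1, kmax * m ≤ F s := by
    intro s hs
    have hint : IntervalIntegrable (fun t => k s t * y t) MeasureTheory.volume 0 1 :=
      ((cksect s hs).mul hy).intervalIntegrable_of_Icc zero_le_one
    have := intervalIntegral.integral_mono_on zero_le_one intervalIntegrable_const hint
      (fun t ht => by
        have h1 : kmax * m ≤ k s t * m :=
          mul_le_mul_of_nonpos_right (hkb s hs t ht) hm.le
        have h2 : k s t * m ≤ k s t * y t :=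
          mul_le_mul_of_nonneg_left (hym t ht) (hknn s hs t ht)
        exact h1.trans h2)
    simpa using this
  -- rewrite double integral
  have hdouble : (∫ s in (0:ℝ)..1, ∫ t in (0:ℝ)..1, G x₀ s * k s t * y t)
      = ∫ s in (0:ℝ)..1, G x₀ s * F s := by
    congr 1
    funext s
    rw [hF]
    simp only [mul_assoc]
    exact intervalIntegral.integral_const_mul _ _
  -- outer bound
  have houter : Gmax * (kmax * m) ≤ ∫ s in (0:ℝ)..1, G x₀ s * F s := by
    have hint1 : IntervalIntegrable (fun s => G x₀ s * (kmax * m))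
        MeasureTheory.volume 0 1 :=
      ((cGsect x₀ hx₀).mul continuousOn_const).intervalIntegrable_of_Icc zero_le_one
    have hint2 : IntervalIntegrable (fun s => G x₀ s * F s) MeasureTheory.volume 0 1 :=
      ((cGsect x₀ hx₀).mul hFcont).intervalIntegrable_of_Icc zero_le_one
    have step1 : (∫ s in (0:ℝ)..1, G x₀ s * (kmax * m))
        ≤ ∫ s in (0:ℝ)..1, G x₀ s * F s :=
      intervalIntegral.integral_mono_on zero_le_one hint1 hint2
        (fun s hs => mul_le_mul_of_nonneg_left (hFlb s hs) (hGnn x₀ hx₀ s hs))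
    have step2 : (∫ s in (0:ℝ)..1, G x₀ s * (kmax * m))
        = (∫ s in (0:ℝ)..1, G x₀ s) * (kmax * m) :=
      intervalIntegral.integral_mul_const _ _
    have hGle : (∫ s in (0:ℝ)..1, G x₀ s) ≤ Gmax := hGmax.2 ⟨x₀, hx₀, rfl⟩
    have hkm_np : kmax * m ≤ 0 := mul_nonpos_of_nonneg_of_nonpos hkmax_nn hm.le
    have step3 : Gmax * (kmax * m) ≤ (∫ s in (0:ℝ)..1, G x₀ s) * (kmax * m) :=
      mul_le_mul_of_nonpos_right hGle hkm_np
    linarith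
  -- nonnegativity of the first term
  have hI1 : 0 ≤ ∫ s in (0:ℝ)..1, G x₀ s * p s :=
    intervalIntegral.integral_nonneg zero_le_one
      (fun s hs => mul_nonneg (hGnn x₀ hx₀ s hs) (hpnn s hs))
  have hfx := hfix x₀ hx₀
  rw [Kop, hdouble] at hfx
  have hNI : N * (Gmax * (kmax * m)) ≤ N * ∫ s in (0:ℝ)..1, G x₀ s * F s :=
    mul_le_mul_of_nonneg_left houter hN
  have hhx : 0 ≤ h x₀ := hhnn x₀ hx₀
  have hfinal : N * (Gmax * (kmax * m)) ≤ m := by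
    linarith [hfx, hmdef]
  have := mul_lt_mul_of_neg_right hd hm
  nlinarith
end

section
/- Let G, k : [0,1]² → ℝ be continuous and nonnegative, N ≥ 0 with N · max|k| · max_x ∫₀¹ G(x,s)ds < 1. If p ≤ 0 and h ≤ 0 on [0,1], then the unique fixed point y of the operator (Ky)(x) = ∫₀¹ G(x,s)p(s)ds + N∫₀¹∫₀¹ G(x,s)k(s,t)y(t)dt ds + h(x) satisfies y ≤ 0 on [0,1]. -/
open Real Set intervalIntegral

theorem stmt_8 (G k : ℝ → ℝ → ℝ) (N : ℝ) (h p : ℝ → ℝ)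
    (hG : ContinuousOn (fun q : ℝ × ℝ => G q.1 q.2) (Set.Icc 0 1 ×ˢ Set.Icc 0 1))
    (hGnn : ∀ x ∈ Set.Icc (0:ℝ) 1, ∀ s ∈ Set.Icc (0:ℝ) 1, 0 ≤ G x s)
    (hk : ContinuousOn (fun q : ℝ × ℝ => k q.1 q.2) (Set.Icc 0 1 ×ˢ Set.Icc 0 1))
    (hknn : ∀ x ∈ Set.Icc (0:ℝ) 1, ∀ t ∈ Set.Icc (0:ℝ) 1, 0 ≤ k x t)
    (hN : 0 ≤ N)
    (hh : ContinuousOn h (Set.Icc 0 1)) (hp : ContinuousOn p (Set.Icc 0 1))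
    (hhnn : ∀ x ∈ Set.Icc (0:ℝ) 1, h x ≤ 0)
    (hpnn : ∀ x ∈ Set.Icc (0:ℝ) 1, p x ≤ 0)
    (kmax Gmax : ℝ)
    (hkmax : IsGreatest {r | ∃ x ∈ Set.Icc (0:ℝ) 1, ∃ t ∈ Set.Icc (0:ℝ) 1, r = |k x t|} kmax)
    (hGmax : IsGreatest {r | ∃ x ∈ Set.Icc (0:ℝ) 1, r = ∫ s in (0:ℝ)..1, G x s} Gmax)
    (hd : N * kmax * Gmax < 1) :
    ∀ y : ℝ → ℝ, ContinuousOn y (Set.Icc 0 1) →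
      (∀ x ∈ Set.Icc (0:ℝ) 1, y x = Kop G k N p h y x) →
      ∀ x ∈ Set.Icc (0:ℝ) 1, y x ≤ 0 := by
  intro y hy hfix
  obtain ⟨x₀, hx₀, hmax⟩ := isCompact_Icc.exists_isMaxOn (nonempty_Icc.2 zero_le_one) hy
  set M := y x₀ with hMdef
  suffices hM0 : M ≤ 0 by
    intro x hx; exact le_trans (hmax hx) hM0
  by_contra hpos
  push_neg at hpos
  have hkmax_nn : 0 ≤ kmax := by
    obtain ⟨x, hx, t, ht, heq⟩ := hkmax.1
    rw [heq]; exact abs_nonneg _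
  have hkle : ∀ s ∈ Icc (0:ℝ) 1, ∀ t ∈ Icc (0:ℝ) 1, k s t ≤ kmax := fun s hs t ht =>
    (le_abs_self _).trans (hkmax.2 ⟨s, hs, t, ht, rfl⟩)
  have hGle : (∫ s in (0:ℝ)..1, G x₀ s) ≤ Gmax := hGmax.2 ⟨x₀, hx₀, rfl⟩
  have hGmax_nn : 0 ≤ Gmax := le_trans (intervalIntegral.integral_nonneg zero_le_one
      (fun s hs => hGnn x₀ hx₀ s hs)) hGle
  have hGx : ContinuousOn (fun s => G x₀ s) (Icc 0 1) :=
    hG.comp ((continuous_const.prodMk continuous_id).continuousOn) (fun s hs => ⟨hx₀, hs⟩)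
  -- first term is nonpositive
  have h1 : (∫ s in (0:ℝ)..1, G x₀ s * p s) ≤ 0 := by
    have hnn := intervalIntegral.integral_nonneg (μ := MeasureTheory.volume) (f := fun s => -(G x₀ s * p s)) zero_le_one
      (fun s hs => neg_nonneg.2 (mul_nonpos_of_nonneg_of_nonpos (hGnn x₀ hx₀ s hs) (hpnn s hs)))
    rw [intervalIntegral.integral_neg] at hnn
    linarith
  -- inner integral bound
  have hinner : ∀ s ∈ Icc (0:ℝ) 1,
      (∫ t in (0:ℝ)..1, G x₀ s * k s t * y t) ≤ G x₀ s * (kmax * M) := by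
    intro s hs
    have hks : ContinuousOn (fun t => k s t) (Icc 0 1) :=
      hk.comp ((continuous_const.prodMk continuous_id).continuousOn) (fun t ht => ⟨hs, ht⟩)
    have hfi : IntervalIntegrable (fun t => G x₀ s * k s t * y t) MeasureTheory.volume 0 1 :=
      ((continuousOn_const.mul hks).mul hy).intervalIntegrable_of_Icc zero_le_one
    calc (∫ t in (0:ℝ)..1, G x₀ s * k s t * y t)
        ≤ ∫ _t in (0:ℝ)..1, G x₀ s * (kmax * M) := by
          apply intervalIntegral.integral_mono_on zero_le_one hfi intervalIntegrable_const
          intro t ht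
          have hG0 := hGnn x₀ hx₀ s hs
          have hk0 := hknn s hs t ht
          have hk1 := hkle s hs t ht
          have hy1 : y t ≤ M := hmax ht
          nlinarith [mul_nonneg hG0 hk0, mul_nonneg hG0 hpos.le]
      _ = G x₀ s * (kmax * M) := by simp
  -- outer integral bound
  have houter : (∫ s in (0:ℝ)..1, ∫ t in (0:ℝ)..1, G x₀ s * k s t * y t)
      ≤ kmax * Gmax * M := by
    have hgi : IntervalIntegrable (fun s => G x₀ s * (kmax * M)) MeasureTheory.volume 0 1 :=
      (hGx.mul continuousOn_const).intervalIntegrable_of_Icc zero_le_one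
    have hstep : (∫ s in (0:ℝ)..1, G x₀ s * (kmax * M)) ≤ kmax * Gmax * M := by
      rw [intervalIntegral.integral_mul_const]
      have h0 : 0 ≤ kmax * M := mul_nonneg hkmax_nn hpos.le
      nlinarith [mul_le_mul_of_nonneg_right hGle h0]
    by_cases hfi : IntervalIntegrable
        (fun s => ∫ t in (0:ℝ)..1, G x₀ s * k s t * y t) MeasureTheory.volume 0 1
    · exact le_trans (intervalIntegral.integral_mono_on zero_le_one hfi hgi hinner) hstep
    · rw [intervalIntegral.integral_undef hfi]
      positivity
  have hfx := hfix x₀ hx₀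
  rw [Kop] at hfx
  have hN2 : N * (∫ s in (0:ℝ)..1, ∫ t in (0:ℝ)..1, G x₀ s * k s t * y t)
      ≤ N * (kmax * Gmax * M) := mul_le_mul_of_nonneg_left houter hN
  have hh0 := hhnn x₀ hx₀
  nlinarith [mul_lt_mul_of_pos_right hd hpos]
end

section
/- Let m > 0 with m < π. Then for all (x,s) ∈ [0,1]² with x ≤ s, the Green function G(x,s) = (1/(2m³))[sin(mx)sin(m(1-s))/sin m − sinh(mx)sinh(m(1-s))/sinh m] satisfies G(x,s) ≥ 0. -/
open Real Set

private lemma aux_hasDerivAt_phi (m : ℝ) (t : ℝ) :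
    HasDerivAt (fun u => Real.sinh m * Real.sin (m*u) - Real.sin m * Real.sinh (m*u))
      (m * (Real.sinh m * Real.cos (m*t) - Real.sin m * Real.cosh (m*t))) t := by
  have hmu : HasDerivAt (fun u : ℝ => m * u) m t := by
    simpa using (hasDerivAt_id t).const_mul m
  have h1 : HasDerivAt (fun u => Real.sin (m*u)) (Real.cos (m*t) * m) t :=
    (Real.hasDerivAt_sin (m*t)).comp t hmu
  have h2 : HasDerivAt (fun u => Real.sinh (m*u)) (Real.cosh (m*t) * m) t :=
    (Real.hasDerivAt_sinh (m*t)).comp t hmu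
  have := (h1.const_mul (Real.sinh m)).fun_sub (h2.const_mul (Real.sin m))
  exact this.congr_deriv (by ring)

private lemma aux_L1 (m : ℝ) (hm : 0 < m) (hmπ : m < Real.pi) :
    ∀ t ∈ Icc (0:ℝ) 1, Real.sin m * Real.sinh (m*t) ≤ Real.sinh m * Real.sin (m*t) := by
  set f : ℝ → ℝ := fun u => Real.sinh m * Real.sin (m*u) - Real.sin m * Real.sinh (m*u) with hf
  have hderiv : deriv f = fun t => m * (Real.sinh m * Real.cos (m*t) - Real.sin m * Real.cosh (m*t)) := by
    funext t; exact (aux_hasDerivAt_phi m t).deriv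
  have hderiv2 : ∀ t, HasDerivAt (deriv f)
      (m * (m * (-(Real.sinh m * Real.sin (m*t)) - Real.sin m * Real.sinh (m*t)))) t := by
    intro t
    rw [hderiv]
    have hmu : HasDerivAt (fun u : ℝ => m * u) m t := by
      simpa using (hasDerivAt_id t).const_mul m
    have h1 : HasDerivAt (fun u => Real.cos (m*u)) (-Real.sin (m*t) * m) t :=
      (Real.hasDerivAt_cos (m*t)).comp t hmu
    have h2 : HasDerivAt (fun u => Real.cosh (m*u)) (Real.sinh (m*t) * m) t :=
      (Real.hasDerivAt_cosh (m*t)).comp t hmu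
    have := ((h1.const_mul (Real.sinh m)).fun_sub (h2.const_mul (Real.sin m))).const_mul m
    exact this.congr_deriv (by ring)
  have hsinm : 0 < Real.sin m := Real.sin_pos_of_pos_of_lt_pi hm hmπ
  have hsinhm : 0 < Real.sinh m := Real.sinh_pos_iff.2 hm
  have hconc : ConcaveOn ℝ (Icc (0:ℝ) 1) f := by
    apply concaveOn_of_deriv2_nonpos (convex_Icc 0 1)
    · exact fun t _ => ((aux_hasDerivAt_phi m t).continuousAt).continuousWithinAt
    · exact fun t _ => ((aux_hasDerivAt_phi m t).differentiableAt).differentiableWithinAt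
    · exact fun t _ => ((hderiv2 t).differentiableAt).differentiableWithinAt
    · intro t ht
      rw [interior_Icc] at ht
      have h2 : deriv^[2] f t
          = m * (m * (-(Real.sinh m * Real.sin (m*t)) - Real.sin m * Real.sinh (m*t))) := by
        show deriv (deriv f) t = _
        exact (hderiv2 t).deriv
      rw [h2]
      have hsin : 0 ≤ Real.sin (m*t) := by
        apply Real.sin_nonneg_of_nonneg_of_le_pi
        · exact mul_nonneg hm.le ht.1.le
        · nlinarith [ht.2, Real.pi_pos]
      have hsinh : 0 ≤ Real.sinh (m*t) := Real.sinh_nonneg_iff.2 (mul_nonneg hm.le ht.1.le)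
      have hA : 0 ≤ Real.sinh m * Real.sin (m*t) := mul_nonneg hsinhm.le hsin
      have hB : 0 ≤ Real.sin m * Real.sinh (m*t) := mul_nonneg hsinm.le hsinh
      nlinarith [mul_pos hm hm]
  intro t ht
  obtain ⟨ht1, ht2⟩ := ht
  have h0 : f 0 = 0 := by simp [hf]
  have h1 : f 1 = 0 := by simp [hf]; ring
  have := hconc.2 (show (0:ℝ) ∈ Icc (0:ℝ) 1 by norm_num)
    (show (1:ℝ) ∈ Icc (0:ℝ) 1 by norm_num)
    (show (0:ℝ) ≤ 1 - t by linarith) (show (0:ℝ) ≤ t from ht1) (by ring)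
  simp only [smul_eq_mul, mul_zero, mul_one, zero_add, h0, h1] at this
  simp only [hf] at this
  linarith
theorem stmt_17 (m : ℝ) (hm : 0 < m) (hmπ : m < Real.pi) :
    ∀ x s : ℝ, 0 ≤ x → x ≤ s → s ≤ 1 →
      0 ≤ (1/(2*m^3)) * (Real.sin (m*x) * Real.sin (m*(1-s)) / Real.sin m
        - Real.sinh (m*x) * Real.sinh (m*(1-s)) / Real.sinh m) := by
  intro x s hx hxs hs1
  have hsinm : 0 < Real.sin m := Real.sin_pos_of_pos_of_lt_pi hm hmπ
  have hsinhm : 0 < Real.sinh m := Real.sinh_pos_iff.2 hm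
  set a := x
  set b := 1 - s with hb
  have ha0 : 0 ≤ a := hx
  have hb0 : 0 ≤ b := by simp [hb]; linarith
  have hab : a + b ≤ 1 := by simp [hb]; linarith
  -- antitone function h
  set h : ℝ → ℝ := fun d => Real.sinh m * Real.cos (m*d) + Real.sin m * Real.cosh (m*d) with hh
  have hhderiv : ∀ t, HasDerivAt h
      (m * (Real.sin m * Real.sinh (m*t) - Real.sinh m * Real.sin (m*t))) t := by
    intro t
    have hmu : HasDerivAt (fun u : ℝ => m * u) m t := by
      simpa using (hasDerivAt_id t).const_mul m
    have h1 : HasDerivAt (fun u => Real.cos (m*u)) (-Real.sin (m*t) * m) t :=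
      (Real.hasDerivAt_cos (m*t)).comp t hmu
    have h2 : HasDerivAt (fun u => Real.cosh (m*u)) (Real.sinh (m*t) * m) t :=
      (Real.hasDerivAt_cosh (m*t)).comp t hmu
    have := (h1.const_mul (Real.sinh m)).fun_add (h2.const_mul (Real.sin m))
    exact this.congr_deriv (by ring)
  have hanti : AntitoneOn h (Icc (0:ℝ) 1) := by
    apply antitoneOn_of_deriv_nonpos (convex_Icc 0 1)
    · exact fun t _ => ((hhderiv t).continuousAt).continuousWithinAt
    · exact fun t ht => ((hhderiv t).differentiableAt).differentiableWithinAt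
    · intro t ht
      rw [interior_Icc] at ht
      rw [(hhderiv t).deriv]
      have := aux_L1 m hm hmπ t ⟨le_of_lt ht.1, le_of_lt ht.2⟩
      nlinarith
  -- apply antitonicity at |a-b| ≤ a+b
  have habs : |a - b| ≤ a + b := abs_sub_le_of_nonneg_of_le ha0 (by linarith) hb0 (by linarith)
  have hmem1 : |a - b| ∈ Icc (0:ℝ) 1 := ⟨abs_nonneg _, le_trans habs hab⟩
  have hmem2 : a + b ∈ Icc (0:ℝ) 1 := ⟨by linarith, hab⟩
  have hkey := hanti hmem1 hmem2 habs
  have hcosabs : Real.cos (m * |a - b|) = Real.cos (m*a - m*b) := by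
    rw [show m * |a - b| = |m*a - m*b| by rw [← mul_sub, abs_mul, abs_of_pos hm], Real.cos_abs]
  have hcoshabs : Real.cosh (m * |a - b|) = Real.cosh (m*a - m*b) := by
    rw [show m * |a - b| = |m*a - m*b| by rw [← mul_sub, abs_mul, abs_of_pos hm], Real.cosh_abs]
  simp only [hh] at hkey
  rw [hcosabs, hcoshabs, show m * (a+b) = m*a + m*b by ring] at hkey
  rw [Real.cos_sub, Real.cos_add, Real.cosh_sub, Real.cosh_add] at hkey
  have K : Real.sin m * (Real.sinh (m*a) * Real.sinh (m*b))
      ≤ Real.sinh m * (Real.sin (m*a) * Real.sin (m*b)) := by nlinarith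
  have hnum : 0 ≤ Real.sin (m*a) * Real.sin (m*b) * Real.sinh m
      - Real.sinh (m*a) * Real.sinh (m*b) * Real.sin m := by nlinarith
  rw [div_sub_div _ _ (ne_of_gt hsinm) (ne_of_gt hsinhm)]
  have : (0:ℝ) < 1/(2*m^3) := by positivity
  apply mul_nonneg (le_of_lt this)
  apply div_nonneg (by nlinarith) (by positivity)
end
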